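/- arXiv:1507.06041 — 3 statements merged into one kernel-verified Lean document; each statement's English description precedes it below -/
import Mathlib

section
/- Let M > 0, L > 0 and Δt > 0 be real numbers. Then every complex root A of the quadratic A² − 2(1 − Δt²·L/(2M))·A + 1 = 0 satisfies |A| ≤ 1 and the two roots are distinct if and only if Δt < 2·√(M/L). (This is the stability criterion for the AMP scheme applied to the model beam–fluid problem, with M = ρ̄h̄ + M̂a⁻ + M̂a⁺ the total effective mass and L the symbol of the beam operator.) -/
/-- Stability criterion for the AMP scheme: every complex root `A` of
`A² − 2(1 − Δt²·L/(2M))·A + 1 = 0` satisfies `|A| ≤ 1` and the two roots are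
distinct, if and only if `Δt < 2·√(M/L)`. -/
theorem amp_stability (M L Δt : ℝ) (hM : 0 < M) (hL : 0 < L) (hΔt : 0 < Δt) :
    ((∀ A : ℂ, A ^ 2 - 2 * ((1 - Δt ^ 2 * L / (2 * M) : ℝ) : ℂ) * A + 1 = 0 →
        ‖A‖ ≤ 1) ∧
      ∃ A₁ A₂ : ℂ, A₁ ≠ A₂ ∧
        A₁ ^ 2 - 2 * ((1 - Δt ^ 2 * L / (2 * M) : ℝ) : ℂ) * A₁ + 1 = 0 ∧
        A₂ ^ 2 - 2 * ((1 - Δt ^ 2 * L / (2 * M) : ℝ) : ℂ) * A₂ + 1 = 0) ↔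
    Δt < 2 * Real.sqrt (M / L) := by
  set β : ℝ := Δt ^ 2 * L / (2 * M) with hβdef
  have hβpos : 0 < β := by rw [hβdef]; positivity
  clear_value β
  have hsq : Real.sqrt (M / L) ^ 2 = M / L := Real.sq_sqrt (by positivity)
  have hspos0 : 0 < Real.sqrt (M / L) := Real.sqrt_pos.2 (by positivity)
  have hML : M / L * L = M := div_mul_cancel₀ M hL.ne'
  have hc2 : (2 * Real.sqrt (M / L)) ^ 2 * L = 4 * M := by
    rw [mul_pow, hsq]; linear_combination (4 : ℝ) * hML
  have key : Δt < 2 * Real.sqrt (M / L) ↔ β < 2 := by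
    rw [hβdef, div_lt_iff₀ (by positivity)]
    constructor
    · intro h
      have hlt : Δt ^ 2 < (2 * Real.sqrt (M / L)) ^ 2 := by nlinarith
      nlinarith [mul_lt_mul_of_pos_right hlt hL]
    · intro h
      have hlt : Δt ^ 2 * L < (2 * Real.sqrt (M / L)) ^ 2 * L := by nlinarith
      have hlt2 : Δt ^ 2 < (2 * Real.sqrt (M / L)) ^ 2 :=
        lt_of_mul_lt_mul_right (by linarith) hL.le
      nlinarith
  rw [key]
  set b : ℝ := 1 - β with hbdef
  clear_value b
  constructor
  · rintro ⟨habs, A₁, A₂, hne, h1, h2⟩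
    by_contra hc
    push_neg at hc
    have hb : b ≤ -1 := by rw [hbdef]; linarith
    rcases lt_or_eq_of_le hb with hblt | hbeq
    · -- b < -1 : real root b - sqrt(b²-1) has abs > 1
      obtain ⟨t, ht2, htnn⟩ : ∃ t : ℝ, t ^ 2 = b ^ 2 - 1 ∧ 0 ≤ t :=
        ⟨Real.sqrt (b ^ 2 - 1), Real.sq_sqrt (by nlinarith), Real.sqrt_nonneg _⟩
      obtain ⟨r, hrdef⟩ : ∃ r : ℝ, r = b - t := ⟨_, rfl⟩
      have hrootR : r ^ 2 - 2 * b * r + 1 = 0 := by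
        rw [hrdef]; nlinarith [ht2]
      have hroot : (r : ℂ) ^ 2 - 2 * ((b : ℝ) : ℂ) * (r : ℂ) + 1 = 0 := by
        have := congrArg (fun x : ℝ => (x : ℂ)) hrootR
        push_cast at this
        convert this using 1
      have hle := habs r hroot
      rw [Complex.norm_real, Real.norm_eq_abs] at hle
      have hr : r < -1 := by
        have : r ≤ b := by rw [hrdef]; linarith
        linarith
      rw [abs_of_neg (by linarith)] at hle
      linarith
    · -- b = -1 : double root -1
      rw [hbeq] at h1 h2
      have key2 : ∀ A : ℂ, A ^ 2 - 2 * (((-1 : ℝ)) : ℂ) * A + 1 = 0 → A = -1 := by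
        intro A hA
        have hsqz : (A + 1) ^ 2 = 0 := by push_cast at hA; linear_combination hA
        have h0 : A + 1 = 0 := sq_eq_zero_iff.mp hsqz
        linear_combination h0
      exact hne ((key2 A₁ h1).trans (key2 A₂ h2).symm)
  · intro hβ2
    have hb1 : -1 < b := by rw [hbdef]; linarith
    have hb2 : b < 1 := by rw [hbdef]; linarith
    obtain ⟨s, hs2, hspos⟩ : ∃ s : ℝ, s ^ 2 = 1 - b ^ 2 ∧ 0 < s :=
      ⟨Real.sqrt (1 - b ^ 2), Real.sq_sqrt (by nlinarith), Real.sqrt_pos.2 (by nlinarith)⟩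
    have hsC : ((s : ℝ) : ℂ) ^ 2 = 1 - ((b : ℝ) : ℂ) ^ 2 := by
      exact_mod_cast congrArg Complex.ofReal hs2
    obtain ⟨r₁, hr1⟩ : ∃ r₁ : ℂ, r₁ = (b : ℂ) + s * Complex.I := ⟨_, rfl⟩
    obtain ⟨r₂, hr2⟩ : ∃ r₂ : ℂ, r₂ = (b : ℂ) - s * Complex.I := ⟨_, rfl⟩
    have hfac : ∀ A : ℂ, A ^ 2 - 2 * ((b : ℝ) : ℂ) * A + 1 = (A - r₁) * (A - r₂) := by
      intro A
      rw [hr1, hr2]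
      linear_combination (-1 : ℂ) * hsC + ((s : ℂ) ^ 2) * Complex.I_sq
    have habs1 : ‖r₁‖ = 1 := by
      have hn : Complex.normSq r₁ = 1 := by
        simp [hr1, Complex.normSq_apply]
        nlinarith [hs2]
      rw [Complex.norm_def, hn, Real.sqrt_one]
    have habs2 : ‖r₂‖ = 1 := by
      have hn : Complex.normSq r₂ = 1 := by
        simp [hr2, Complex.normSq_apply]
        nlinarith [hs2]
      rw [Complex.norm_def, hn, Real.sqrt_one]
    constructor
    · intro A hA
      rw [hfac A] at hA
      rcases mul_eq_zero.mp hA with h | h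
      · rw [sub_eq_zero] at h; rw [h, habs1]
      · rw [sub_eq_zero] at h; rw [h, habs2]
    · refine ⟨r₁, r₂, ?_, ?_, ?_⟩
      · intro h
        have him := congrArg Complex.im h
        simp [hr1, hr2] at him
        linarith
      · rw [hfac]; simp
      · rw [hfac]; simp
end

section
/- Let m > 0, L > 0 and Mₐ ≥ m be real numbers. Then for every Δt > 0 the cubic polynomial P(A) = m·A·(A−1)² + Δt²·L·A² + Mₐ·(A−1)² fails the weak-stability condition: it has a complex root A with |A| > 1, or a repeated root of modulus one. (Hence the traditional partitioned scheme is unconditionally unstable when the total added mass is at least the beam mass.) -/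
open Polynomial

/-- The amplification polynomial `P(A) = m·A·(A−1)² + Δt²·L·A² + Mₐ·(A−1)²`
of the traditional partitioned scheme, as a polynomial over `ℂ`. -/
noncomputable def TPpoly (m L Ma Δt : ℝ) : Polynomial ℂ :=
  C (m : ℂ) * X * (X - 1) ^ 2 + C ((Δt ^ 2 * L : ℝ) : ℂ) * X ^ 2 +
    C (Ma : ℂ) * (X - 1) ^ 2

/-- If the total added mass is at least the beam mass (`Mₐ ≥ m`), then for every
time step `Δt > 0` the traditional partitioned scheme fails weak stability:
its amplification polynomial has a root of modulus `> 1`, or a repeated root of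
modulus one. -/
theorem tp_unconditionally_unstable (m L Ma : ℝ) (hm : 0 < m) (hL : 0 < L)
    (hMa : m ≤ Ma) :
    ∀ Δt : ℝ, 0 < Δt →
      (∃ A : ℂ, (TPpoly m L Ma Δt).IsRoot A ∧ 1 < ‖A‖) ∨
      (∃ A : ℂ, ‖A‖ = 1 ∧ 2 ≤ (TPpoly m L Ma Δt).rootMultiplicity A) := by
  intro Δt hΔt
  left
  set f : ℝ → ℝ := fun x => m * x * (x - 1) ^ 2 + Δt ^ 2 * L * x ^ 2 + Ma * (x - 1) ^ 2
    with hf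
  set b : ℝ := -(Δt ^ 2 * L + Ma + m) / m with hb
  have hΔL : 0 < Δt ^ 2 * L := by positivity
  have hMa0 : 0 < Ma := lt_of_lt_of_le hm hMa
  have hmb : m * b = -(Δt ^ 2 * L + Ma + m) := by
    rw [hb]; field_simp
  have hb1 : b < -1 := by
    nlinarith
  have hfb : f b < 0 := by
    have hbneg : b < 0 := by linarith
    have h1 : Δt ^ 2 * L * b ^ 2 ≤ Δt ^ 2 * L * (b - 1) ^ 2 := by nlinarith
    have h2 : (0:ℝ) < (b - 1) ^ 2 := by nlinarith
    have : f b = m * b * (b - 1) ^ 2 + Δt ^ 2 * L * b ^ 2 + Ma * (b - 1) ^ 2 := rfl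
    nlinarith [sq_nonneg (b - 1)]
  have hfm1 : 0 < f (-1) := by
    have : f (-1) = -4 * m + Δt ^ 2 * L + 4 * Ma := by
      simp only [hf]; ring
    rw [this]; linarith
  have hcont : ContinuousOn f (Set.Icc b (-1)) := by
    apply Continuous.continuousOn; fun_prop
  have hsub := intermediate_value_Icc (le_of_lt hb1) hcont
  have h0mem : (0:ℝ) ∈ Set.Icc (f b) (f (-1)) := ⟨le_of_lt hfb, le_of_lt hfm1⟩
  obtain ⟨r, hr, hfr⟩ := hsub h0mem
  have hrne : r ≠ -1 := by
    intro h; rw [h] at hfr; linarith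
  have hrlt : r < -1 := lt_of_le_of_ne hr.2 hrne
  refine ⟨(r : ℂ), ?_, ?_⟩
  · have heval : (TPpoly m L Ma Δt).eval (r : ℂ) = ((f r : ℝ) : ℂ) := by
      simp only [TPpoly, hf, eval_add, eval_mul, eval_pow, eval_sub, eval_C, eval_X,
        eval_one]
      push_cast
      ring
    simp [Polynomial.IsRoot, heval, hfr]
  · rw [Complex.norm_real, Real.norm_eq_abs, abs_of_neg (by linarith : r < 0)]
    linarith
end

section
/- Let m > 0, L > 0, Mₐ⁻ ≥ 0, Mₐ⁺ ≥ 0 and Δt > 0 be real numbers with Δt < 2·√(m/L). Then Δt < 2·√((m + Mₐ⁻ + Mₐ⁺)/L), and consequently every complex root A of the quadratic A² − 2(1 − Δt²·L/(2(m + Mₐ⁻ + Mₐ⁺)))·A + 1 = 0 satisfies |A| = 1 and the two roots are distinct. (Hence any time step that is stable for the leap-frog scheme for the beam alone is also stable for the AMP scheme.) -/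
/-- A time step stable for the leap-frog scheme for the beam alone
(`Δt < 2√(m/L)`) is also stable for the AMP scheme: then
`Δt < 2√((m + Mₐ⁻ + Mₐ⁺)/L)`, every root of the AMP amplification polynomial
has modulus one, and the two roots are distinct. -/
theorem leapfrog_step_stable_for_amp (m L Mam Map Δt : ℝ) (hm : 0 < m)
    (hL : 0 < L) (hMam : 0 ≤ Mam) (hMap : 0 ≤ Map) (hΔt : 0 < Δt)
    (hstab : Δt < 2 * Real.sqrt (m / L)) :
    Δt < 2 * Real.sqrt ((m + Mam + Map) / L) ∧
    (∀ A : ℂ,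
        A ^ 2 - 2 * ((1 - Δt ^ 2 * L / (2 * (m + Mam + Map)) : ℝ) : ℂ) * A + 1 = 0 →
        ‖A‖ = 1) ∧
    ∃ A₁ A₂ : ℂ, A₁ ≠ A₂ ∧
      A₁ ^ 2 - 2 * ((1 - Δt ^ 2 * L / (2 * (m + Mam + Map)) : ℝ) : ℂ) * A₁ + 1 = 0 ∧
      A₂ ^ 2 - 2 * ((1 - Δt ^ 2 * L / (2 * (m + Mam + Map)) : ℝ) : ℂ) * A₂ + 1 = 0 := by
  set M : ℝ := m + Mam + Map with hM
  have hMpos : 0 < M := by positivity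
  have hmono : Real.sqrt (m / L) ≤ Real.sqrt (M / L) :=
    Real.sqrt_le_sqrt ((div_le_div_iff_of_pos_right hL).mpr (by simp [hM]; linarith))
  have hnew : Δt < 2 * Real.sqrt (M / L) := lt_of_lt_of_le hstab (by linarith)
  have hsq : Δt ^ 2 < 4 * (M / L) := by
    have h1 : Δt ^ 2 < (2 * Real.sqrt (M / L)) ^ 2 := by
      apply sq_lt_sq' _ hnew
      nlinarith [Real.sqrt_nonneg (M / L)]
    have h2 : (Real.sqrt (M / L)) ^ 2 = M / L := Real.sq_sqrt (by positivity)
    nlinarith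
  set b : ℝ := 1 - Δt ^ 2 * L / (2 * M) with hb
  have hML : M / L * L = M := div_mul_cancel₀ _ hL.ne'
  have hbound : Δt ^ 2 * L / (2 * M) < 2 := by
    rw [div_lt_iff₀ (by positivity)]
    nlinarith [mul_lt_mul_of_pos_right hsq hL]
  have hpos : 0 < Δt ^ 2 * L / (2 * M) := by positivity
  have hb1 : -1 < b := by rw [hb]; linarith
  have hb2 : b < 1 := by rw [hb]; linarith
  have hbsq : b ^ 2 < 1 := by nlinarith
  set s : ℝ := Real.sqrt (1 - b ^ 2) with hs
  have hspos : 0 < s := Real.sqrt_pos.mpr (by linarith)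
  have hs2 : s ^ 2 = 1 - b ^ 2 := Real.sq_sqrt (by linarith)
  have hsC : ((s : ℝ) : ℂ) ^ 2 = 1 - ((b : ℝ) : ℂ) ^ 2 := by
    exact_mod_cast congrArg (Complex.ofReal) hs2
  have habs : ∀ e : ℝ, ‖(b : ℂ) + (e : ℂ) * Complex.I‖ ^ 2 = b ^ 2 + e ^ 2 := by
    intro e
    rw [← Complex.normSq_eq_norm_sq]
    simp [Complex.normSq_apply]
    ring
  refine ⟨hnew, ?_, ?_⟩
  · intro A hA
    have hfact : (A - ((b : ℂ) + (s : ℂ) * Complex.I)) *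
        (A - ((b : ℂ) - (s : ℂ) * Complex.I)) = 0 := by
      linear_combination hA + hsC - ((s : ℂ)) ^ 2 * Complex.I_sq
    rcases mul_eq_zero.mp hfact with h | h
    · have hA' : A = (b : ℂ) + (s : ℂ) * Complex.I := by linear_combination h
      have h1 := habs s
      rw [← hA'] at h1
      nlinarith [norm_nonneg A]
    · have hA' : A = (b : ℂ) + ((-s : ℝ) : ℂ) * Complex.I := by
        push_cast; linear_combination h
      have h1 := habs (-s)
      rw [← hA'] at h1
      nlinarith [norm_nonneg A]
  · refine ⟨(b : ℂ) + (s : ℂ) * Complex.I, (b : ℂ) - (s : ℂ) * Complex.I, ?_, ?_, ?_⟩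
    · intro h
      have h2 : (2 : ℂ) * (s : ℂ) * Complex.I = 0 := by linear_combination h
      simp [Complex.I_ne_zero, Complex.ofReal_eq_zero] at h2
      exact hspos.ne' h2
    · linear_combination ((s : ℂ)) ^ 2 * Complex.I_sq - hsC
    · linear_combination ((s : ℂ)) ^ 2 * Complex.I_sq - hsC
end
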